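/- Let x ≥ 0 and y be integers, and let G_0 be a graph of minimum order in the nonempty family M(x,y). Then |V(G_0)| = χ(G_0) + 2f(G_0) − x − 1. -/

import Mathlib

/-- The chromatic number of `G` as a natural number. -/
noncomputable def chi {V : Type*} (G : SimpleGraph V) : ℕ := G.chromaticNumber.toNat

/-- `f(G) = χ(G) − cl(G)`. -/
noncomputable def fDiff {V : Type*} (G : SimpleGraph V) : ℕ := chi G - G.cliqueNum

/-- Membership in the family `M(x,y) = {G : |V(G)| < χ(G) + 2f(G) − x and f(G) ≤ y}`. -/
def inM (x y : ℤ) {V : Type*} [Fintype V] (G : SimpleGraph V) : Prop :=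
  (Fintype.card V : ℤ) < chi G + 2 * fDiff G - x ∧ (fDiff G : ℤ) ≤ y

/-- The set of orders of members of `M(x,y)`. -/
def McardSet (x y : ℤ) : Set ℕ := {n | ∃ G : SimpleGraph (Fin n), inM x y G}

open SimpleGraph Finset

section Aux

variable {V : Type*} [Fintype V]

lemma colorable_chi (G : SimpleGraph V) : G.Colorable (chi G) :=
  G.colorable_chromaticNumber_of_fintype

lemma chi_le_of_colorable {G : SimpleGraph V} {m : ℕ} (h : G.Colorable m) : chi G ≤ m := by
  have h2 := h.chromaticNumber_le
  have := ENat.toNat_le_toNat h2 (by simp)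
  simpa [chi] using this

lemma cliqueNum_le_chi (G : SimpleGraph V) : G.cliqueNum ≤ chi G := by
  obtain ⟨s, hs⟩ := G.exists_isNClique_cliqueNum
  have := hs.isClique.card_le_of_colorable (colorable_chi G)
  rwa [hs.card_eq] at this

lemma chi_le_card (G : SimpleGraph V) : chi G ≤ Fintype.card V :=
  chi_le_of_colorable G.colorable_of_fintype

lemma chi_le_of_embedding {W : Type*} [Fintype W] {G : SimpleGraph V} {H : SimpleGraph W}
    (f : G ↪g H) : chi G ≤ chi H :=
  chi_le_of_colorable (Colorable.of_hom f.toHom (colorable_chi H))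

lemma cliqueNum_le_of_embedding {W : Type*} [Fintype W] {G : SimpleGraph V} {H : SimpleGraph W}
    (f : G ↪g H) : G.cliqueNum ≤ H.cliqueNum := by
  classical
  obtain ⟨s, hs⟩ := G.exists_isNClique_cliqueNum
  have hc : H.IsClique (s.image f) := by
    intro a ha b hb hab
    simp only [coe_image, Set.mem_image, mem_coe] at ha hb
    obtain ⟨a', ha', rfl⟩ := ha
    obtain ⟨b', hb', rfl⟩ := hb
    have hne : a' ≠ b' := fun h => hab (by rw [h])
    exact f.map_rel_iff.mpr (hs.isClique ha' hb' hne)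
  have hcard := IsClique.card_le_cliqueNum (G := H) (tc := hc)
  rwa [Finset.card_image_of_injective _ f.injective, hs.card_eq] at hcard

lemma chi_cliqueNum_comap {W : Type*} [Fintype W] (e : V ≃ W) (G : SimpleGraph W) :
    chi (G.comap e.toEmbedding) = chi G ∧ (G.comap e.toEmbedding).cliqueNum = G.cliqueNum := by
  have f := SimpleGraph.Iso.comap e G
  exact ⟨le_antisymm (chi_le_of_embedding f.toEmbedding) (chi_le_of_embedding f.symm.toEmbedding),
    le_antisymm (cliqueNum_le_of_embedding f.toEmbedding)
      (cliqueNum_le_of_embedding f.symm.toEmbedding)⟩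

/-- If `v ≁ w`, a coloring of `G - v - w` extends to a coloring of `G` with one new color. -/
lemma colorable_succ_of_pair (G : SimpleGraph V) (v w : V) (hnadj : ¬ G.Adj v w)
    {m : ℕ} (h : (G.induce ({v, w}ᶜ : Set V)).Colorable m) : G.Colorable (m + 1) := by
  classical
  obtain ⟨c⟩ := h
  refine ⟨SimpleGraph.Coloring.mk
    (fun u => if hu : u ∈ ({v, w}ᶜ : Set V) then (c ⟨u, hu⟩).castSucc else Fin.last m) ?_⟩
  intro a b hab hcol
  try dsimp only at hcol
  by_cases ha : a ∈ ({v, w}ᶜ : Set V) <;> by_cases hb : b ∈ ({v, w}ᶜ : Set V)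
  · rw [dif_pos ha, dif_pos hb] at hcol
    have hadj : (G.induce ({v, w}ᶜ : Set V)).Adj ⟨a, ha⟩ ⟨b, hb⟩ := hab
    exact c.valid hadj (Fin.castSucc_injective _ hcol)
  · rw [dif_pos ha, dif_neg hb] at hcol
    exact absurd hcol (Fin.castSucc_lt_last _).ne
  · rw [dif_neg ha, dif_pos hb] at hcol
    exact absurd hcol.symm (Fin.castSucc_lt_last _).ne
  · simp only [Set.notMem_compl_iff, Set.mem_insert_iff, Set.mem_singleton_iff] at ha hb
    rcases ha with rfl | rfl <;> rcases hb with rfl | rfl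
    · exact G.irrefl hab
    · exact hnadj hab
    · exact hnadj hab.symm
    · exact G.irrefl hab

/-- König-type result: if both `K` and its complement are cliques, then `χ(G) ≤ ω(G)`. -/
lemma chi_le_cliqueNum_of_compl_clique [DecidableEq V] (G : SimpleGraph V) (K : Finset V)
    (hK : G.IsClique (K : Set V)) (hKc : G.IsClique ((Kᶜ : Finset V) : Set V)) :
    chi G ≤ G.cliqueNum := by
  classical
  -- complement-graph neighborhoods from K to Kᶜ
  set N : {k // k ∈ K} → Finset {b // b ∈ (Kᶜ : Finset V)} :=
    fun k => (Kᶜ : Finset V).attach.filter (fun b => ¬ G.Adj k.1 b.1) with hN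
  set d : ℕ := (K.attach.powerset.sup fun S => S.card - (S.biUnion N).card) with hd
  have hdefect : ∀ s : Finset {k // k ∈ K}, s.card ≤ (s.biUnion N).card + d := by
    intro s
    have hmem : s ∈ K.attach.powerset :=
      Finset.mem_powerset.mpr (fun a _ => Finset.mem_attach _ _)
    have := Finset.le_sup (f := fun S => S.card - (S.biUnion N).card) hmem
    try dsimp only at this
    rw [← hd] at this
    omega
  -- Hall's condition
  have hall : ∀ s : Finset {k // k ∈ K}, s.card ≤ (s.biUnion
      (fun k => ((N k).image Sum.inl ∪
        univ.image (Sum.inr : Fin d → {b // b ∈ (Kᶜ : Finset V)} ⊕ Fin d)))).card := by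
    intro s
    rcases s.eq_empty_or_nonempty with rfl | hs
    · simp
    have hsub : ((s.biUnion N).image Sum.inl ∪
          univ.image (Sum.inr : Fin d → {b // b ∈ (Kᶜ : Finset V)} ⊕ Fin d))
        ⊆ s.biUnion (fun k => (N k).image Sum.inl ∪ univ.image Sum.inr) := by
      intro z hz
      rcases Finset.mem_union.mp hz with hz | hz
      · obtain ⟨b, hb, rfl⟩ := Finset.mem_image.mp hz
        obtain ⟨k, hk, hbk⟩ := Finset.mem_biUnion.mp hb
        exact Finset.mem_biUnion.mpr ⟨k, hk, Finset.mem_union_left _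
          (Finset.mem_image_of_mem _ hbk)⟩
      · obtain ⟨k, hk⟩ := hs
        exact Finset.mem_biUnion.mpr ⟨k, hk, Finset.mem_union_right _ hz⟩
    have hdisj : Disjoint ((s.biUnion N).image Sum.inl)
        (univ.image (Sum.inr : Fin d → {b // b ∈ (Kᶜ : Finset V)} ⊕ Fin d)) := by
      simp [Finset.disjoint_left]
    calc s.card ≤ (s.biUnion N).card + d := hdefect s
      _ = ((s.biUnion N).image Sum.inl ∪
            univ.image (Sum.inr : Fin d → {b // b ∈ (Kᶜ : Finset V)} ⊕ Fin d)).card := by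
          rw [Finset.card_union_of_disjoint hdisj,
            Finset.card_image_of_injective _ Sum.inl_injective,
            Finset.card_image_of_injective _ Sum.inr_injective, Finset.card_univ,
            Fintype.card_fin]
      _ ≤ _ := Finset.card_le_card hsub
  obtain ⟨f, hfinj, hfmem⟩ := (Finset.all_card_le_biUnion_card_iff_exists_injective _).mp hall
  have hmemK : ∀ u : V, u ∉ (Kᶜ : Finset V) → u ∈ K := fun u hu => by simpa using hu
  -- build the coloring
  have hcolor : G.Colorable ((Kᶜ : Finset V).card + d) := by
    have C : G.Coloring ({b // b ∈ (Kᶜ : Finset V)} ⊕ Fin d) := by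
      refine SimpleGraph.Coloring.mk
        (fun u => if hu : u ∈ (Kᶜ : Finset V) then Sum.inl ⟨u, hu⟩
          else f ⟨u, hmemK u hu⟩) ?_
      intro a b hab hcol
      try dsimp only at hcol
      by_cases ha : a ∈ (Kᶜ : Finset V) <;> by_cases hb : b ∈ (Kᶜ : Finset V)
      · rw [dif_pos ha, dif_pos hb] at hcol
        have : a = b := by simpa using hcol
        exact G.irrefl (this ▸ hab)
      · rw [dif_pos ha, dif_neg hb] at hcol
        have hfb := hfmem ⟨b, hmemK b hb⟩
        rw [← hcol] at hfb
        rcases Finset.mem_union.mp hfb with hfb | hfb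
        · obtain ⟨z, hz, hz2⟩ := Finset.mem_image.mp hfb
          have : z = ⟨a, ha⟩ := Sum.inl_injective hz2
          subst this
          have : ¬ G.Adj b a := by
            have := Finset.mem_filter.mp hz
            exact this.2
          exact this hab.symm
        · obtain ⟨z, _, hz2⟩ := Finset.mem_image.mp hfb
          exact absurd hz2 (by simp)
      · rw [dif_neg ha, dif_pos hb] at hcol
        have hfa := hfmem ⟨a, hmemK a ha⟩
        rw [hcol] at hfa
        rcases Finset.mem_union.mp hfa with hfa | hfa
        · obtain ⟨z, hz, hz2⟩ := Finset.mem_image.mp hfa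
          have : z = ⟨b, hb⟩ := Sum.inl_injective hz2
          subst this
          have : ¬ G.Adj a b := (Finset.mem_filter.mp hz).2
          exact this hab
        · obtain ⟨z, _, hz2⟩ := Finset.mem_image.mp hfa
          exact absurd hz2 (by simp)
      · rw [dif_neg ha, dif_neg hb] at hcol
        have : (⟨a, hmemK a ha⟩ : {k // k ∈ K}) = ⟨b, hmemK b hb⟩ := hfinj hcol
        have hab' : a = b := congrArg Subtype.val this
        exact G.irrefl (hab' ▸ hab)
    have := C.colorable
    simpa only [Fintype.card_sum, Fintype.card_coe, Fintype.card_fin] using this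
  have hchi : chi G ≤ (Kᶜ : Finset V).card + d := chi_le_of_colorable hcolor
  -- the clique number is at least |Kᶜ| + d
  by_cases hd0 : d = 0
  · have hcard := IsClique.card_le_cliqueNum (G := G) (tc := hKc)
    omega
  · obtain ⟨S, hSmem, hSeq⟩ := Finset.exists_mem_eq_sup K.attach.powerset
      ⟨∅, Finset.empty_mem_powerset _⟩ (fun S => S.card - (S.biUnion N).card)
    rw [← hd] at hSeq
    set B : Finset V := (S.biUnion N).image Subtype.val with hB
    have hBsub : B ⊆ Kᶜ := by
      intro b hb
      obtain ⟨⟨b', hb'⟩, _, rfl⟩ := Finset.mem_image.mp hb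
      exact hb'
    have hBcard : B.card = (S.biUnion N).card :=
      Finset.card_image_of_injective _ Subtype.val_injective
    set W : Finset V := S.image Subtype.val ∪ (Kᶜ \ B) with hW
    have hWclique : G.IsClique (W : Set V) := by
      intro a ha b hb hne
      simp only [hW, coe_union, Set.mem_union, mem_coe, Finset.mem_image,
        Finset.mem_sdiff] at ha hb
      rcases ha with ⟨a', ha', rfl⟩ | ⟨hac, haB⟩ <;>
        rcases hb with ⟨b', hb', rfl⟩ | ⟨hbc, hbB⟩
      · exact hK a'.2 b'.2 hne
      · -- a = ↑a' with a' ∈ S, b ∈ Kᶜ \ B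
        by_contra hnadj
        have hmem : (⟨b, hbc⟩ : {x // x ∈ (Kᶜ : Finset V)}) ∈ N a' := by
          refine Finset.mem_filter.mpr ⟨Finset.mem_attach _ _, ?_⟩
          exact hnadj
        exact hbB (Finset.mem_image.mpr ⟨⟨b, hbc⟩, Finset.mem_biUnion.mpr ⟨a', ha', hmem⟩, rfl⟩)
      · by_contra hnadj
        have hmem : (⟨a, hac⟩ : {x // x ∈ (Kᶜ : Finset V)}) ∈ N b' := by
          refine Finset.mem_filter.mpr ⟨Finset.mem_attach _ _, ?_⟩
          exact fun h => hnadj h.symm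
        exact haB (Finset.mem_image.mpr ⟨⟨a, hac⟩, Finset.mem_biUnion.mpr ⟨b', hb', hmem⟩, rfl⟩)
      · exact hKc hac hbc hne
    have hWcliqueNum := IsClique.card_le_cliqueNum (G := G) (tc := hWclique)
    have hWcard : W.card = S.card + ((Kᶜ : Finset V).card - B.card) := by
      rw [hW, Finset.card_union_of_disjoint, Finset.card_image_of_injective _
        Subtype.val_injective, Finset.card_sdiff_of_subset hBsub]
      rw [Finset.disjoint_left]
      intro z hz hz2
      obtain ⟨z', _, rfl⟩ := Finset.mem_image.mp hz
      have : (z' : V) ∈ (Kᶜ : Finset V) := (Finset.mem_sdiff.mp hz2).1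
      exact (Finset.mem_compl.mp this) z'.2
    have hBle : B.card ≤ (Kᶜ : Finset V).card := Finset.card_le_card hBsub
    omega

end Aux

theorem stmt13 {V : Type*} [Fintype V] (x y : ℤ) (hx : 0 ≤ x)
    (G₀ : SimpleGraph V) (hG₀ : inM x y G₀)
    (hmin : ∀ n ∈ McardSet x y, Fintype.card V ≤ n) :
    (Fintype.card V : ℤ) = chi G₀ + 2 * fDiff G₀ - x - 1 := by
  classical
  obtain ⟨h1, h2⟩ := hG₀
  have hωχ : G₀.cliqueNum ≤ chi G₀ := cliqueNum_le_chi G₀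
  have hfd : (fDiff G₀ : ℤ) = (chi G₀ : ℤ) - G₀.cliqueNum := by
    unfold fDiff
    exact Nat.cast_sub hωχ
  by_contra hne
  have h3 : (Fintype.card V : ℤ) ≤ chi G₀ + 2 * fDiff G₀ - x - 2 := by omega
  obtain ⟨K, hK⟩ := G₀.exists_isNClique_cliqueNum
  by_cases hcase : ∃ v ∈ (Kᶜ : Finset V), ∃ w ∈ (Kᶜ : Finset V), v ≠ w ∧ ¬ G₀.Adj v w
  · -- Case A: delete the two nonadjacent vertices v, w outside the maximum clique K
    obtain ⟨v, hv, w, hw, hvw, hnadj⟩ := hcase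
    set s : Set V := ({v, w}ᶜ : Set V) with hs
    have hcard2 : 2 ≤ Fintype.card V := Fintype.one_lt_card_iff.mpr ⟨v, w, hvw⟩
    have hcardpair : Fintype.card ({v, w} : Set V) = 2 := by
      rw [← Set.toFinset_card]
      rw [show ({v, w} : Set V).toFinset = {v, w} by simp]
      exact Finset.card_pair hvw
    have hcards : Fintype.card s = Fintype.card V - 2 := by
      have h := Fintype.card_compl_set ({v, w} : Set V)
      rw [hcardpair] at h
      exact h
    set H := G₀.induce s with hH
    have hχle : chi H ≤ chi G₀ := chi_le_of_embedding (SimpleGraph.Embedding.induce s)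
    have hχge : chi G₀ ≤ chi H + 1 :=
      chi_le_of_colorable (colorable_succ_of_pair G₀ v w hnadj (colorable_chi H))
    have hKsub : ∀ a ∈ K, a ∈ s := by
      intro a haK
      simp only [hs, Set.mem_compl_iff, Set.mem_insert_iff, Set.mem_singleton_iff, not_or]
      constructor
      · rintro rfl; exact (Finset.mem_compl.mp hv) haK
      · rintro rfl; exact (Finset.mem_compl.mp hw) haK
    have hωH : H.cliqueNum = G₀.cliqueNum := by
      refine le_antisymm (cliqueNum_le_of_embedding (SimpleGraph.Embedding.induce s)) ?_
      have hclique : H.IsClique ((K.subtype (· ∈ s)) : Set ↥s) := by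
        intro a ha b hb hne
        simp only [mem_coe, Finset.mem_subtype] at ha hb
        have : G₀.Adj a.1 b.1 := hK.isClique ha hb (fun h => hne (Subtype.ext h))
        exact this
      have hcard := IsClique.card_le_cliqueNum (G := H) (tc := hclique)
      rwa [Finset.card_subtype, Finset.filter_true_of_mem hKsub, hK.card_eq] at hcard
    -- transport H to a graph on Fin (card s)
    set e : Fin (Fintype.card s) ≃ ↥s := (Fintype.equivFin ↥s).symm with he
    obtain ⟨hχ', hω'⟩ := chi_cliqueNum_comap e H
    have hωχH : H.cliqueNum ≤ chi H := cliqueNum_le_chi H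
    have hωχ' : G₀.cliqueNum ≤ chi H := hωH ▸ hωχH
    have hfd' : (fDiff (H.comap e.toEmbedding) : ℤ)
        = (chi H : ℤ) - (G₀.cliqueNum : ℤ) := by
      unfold fDiff
      rw [hχ', hω', hωH]
      exact Nat.cast_sub hωχ'
    rw [hfd] at h3 h2
    have hmem : (Fintype.card s) ∈ McardSet x y := by
      refine ⟨H.comap e.toEmbedding, ?_, ?_⟩
      · rw [Fintype.card_fin, hχ', hfd', hcards]
        omega
      · rw [hfd']
        omega
    have := hmin _ hmem
    rw [hcards] at this
    omega
  · -- Case B: Kᶜ is a clique, hence χ(G₀) ≤ ω(G₀), contradicting membership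
    have hKc : G₀.IsClique ((Kᶜ : Finset V) : Set V) := by
      intro a ha b hb hne
      by_contra hnadj
      exact hcase ⟨a, by simpa using ha, b, by simpa using hb, hne, hnadj⟩
    have hle := chi_le_cliqueNum_of_compl_clique G₀ K hK.isClique hKc
    have hχn : chi G₀ ≤ Fintype.card V := chi_le_card G₀
    have : chi G₀ = G₀.cliqueNum := le_antisymm hle hωχ
    rw [hfd, this] at h1
    have : (G₀.cliqueNum : ℤ) ≤ (Fintype.card V : ℤ) := by
      exact_mod_cast le_trans hωχ hχn
    omega
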